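/- Let 𝒜 be an activation sheaf on a finite simplicial complex X and s a global section. If c is in the star of the active region of node n but not in active(s,n), then s(c) = ⊥. In particular, the star of the active region of a node does not intersect the active region of any other node. -/

import Mathlib

open scoped Classical

/-- An abstract simplicial complex: a family of nonempty finite subsets of a vertex set,
closed under nonempty subsets. -/
def IsASC {N : Type} (K : Set (Finset N)) : Prop :=
  (∀ s ∈ K, s.Nonempty) ∧ ∀ s ∈ K, ∀ t : Finset N, t ⊆ s → t.Nonempty → t ∈ K

/-- A simplex `c` and a node `n` have a coface in common in `K`. -/
def CommonCoface {N : Type} (K : Set (Finset N)) (c : Finset N) (n : N) : Prop :=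
  ∃ d ∈ K, c ⊆ d ∧ n ∈ d

/-- The stalk of the activation sheaf at a simplex `c` is
`𝒜(c) = {n : CommonCoface K c n} ∪ {⊥}`; we model it as `Option N`, with `none` playing
the role of `⊥`.  The restriction map `𝒜(c ⊆ d)` sends `n` to `n` if `n ∈ 𝒜(d)` and to
`⊥` otherwise. -/
noncomputable def sheafRestrict {N : Type} (K : Set (Finset N)) (d : Finset N) :
    Option N → Option N :=
  fun x => x.bind fun m => if CommonCoface K d m then some m else none

/-- A global section of the activation sheaf `𝒜` on `K`: a choice `s(c) ∈ 𝒜(c)` for each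
simplex `c ∈ K`, compatible with the restriction maps. -/
def IsGlobalSection {N : Type} (K : Set (Finset N)) (s : Finset N → Option N) : Prop :=
  (∀ c ∈ K, ∀ m : N, s c = some m → CommonCoface K c m) ∧
  (∀ c ∈ K, ∀ d ∈ K, c ⊆ d → s d = sheafRestrict K d (s c))

/-- The active region `active(s,n) = {a ∈ X : s(a) = n}` of a node `n` in a section. -/
def activeRegion {N : Type} (K : Set (Finset N)) (s : Finset N → Option N) (n : N) :
    Set (Finset N) :=
  {a ∈ K | s a = some n}

/-- The star of a subset `A` of a simplicial complex `K`: all simplices of `K` having a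
face in `A`. -/
def star {N : Type} (K : Set (Finset N)) (A : Set (Finset N)) : Set (Finset N) :=
  {c ∈ K | ∃ a ∈ A, a ⊆ c}

/-- If `c` is in the star of the active region of node `n` but not in `active(s,n)`,
then `s(c) = ⊥`.  In particular, the star of the active region of a node does not
intersect the active region of any other node. -/
theorem star_of_active_region {N : Type} [Fintype N] [DecidableEq N]
    (K : Set (Finset N)) (hK : IsASC K) (s : Finset N → Option N)
    (hs : IsGlobalSection K s) (n : N) :
    (∀ c ∈ star K (activeRegion K s n), c ∉ activeRegion K s n → s c = none) ∧
    (∀ m : N, m ≠ n →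
      star K (activeRegion K s n) ∩ activeRegion K s m = ∅) := by
  have key : ∀ c ∈ star K (activeRegion K s n), s c = none ∨ s c = some n := by
    intro c hc
    obtain ⟨hcK, a, ⟨haK, hsa⟩, hac⟩ := hc
    have := hs.2 a haK c hcK hac
    rw [hsa] at this
    simp only [sheafRestrict, Option.bind] at this
    split_ifs at this with h
    · right; exact this
    · left; exact this
  constructor
  · intro c hc hcn
    rcases key c hc with h | h
    · exact h
    · exact absurd ⟨hc.1, h⟩ hcn
  · intro m hm
    ext c
    simp only [Set.mem_inter_iff, Set.mem_empty_iff_false, iff_false, not_and]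
    intro hc hcm
    rcases key c hc with h | h
    · rw [hcm.2] at h; exact Option.some_ne_none m h
    · rw [hcm.2] at h; exact hm (Option.some.inj h)
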